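/- For every odd integer n with n ≥ 431 and n ≠ 461, there exist a positive integer u and integers p, q, r with 2 ≤ p < q < r such that n = u²p(p−1) + q(q−1) + r(r−1) + 2uq(p−1) + 2ur(p−1) + 2r(q−1) + u + 2; that is, n = d(p, q, r, u, 1, 1). -/
import Mathlib

/-- `d(p, q, r, u, v, w) = d₃ + 1/2` for the overtwisted contact structure on S³ supported by
the real algebraic open book of the graph multilink of splice type (I-I-I). -/
def dIII (p q r u v w : ℤ) : ℤ :=
  u^2 * p * (p - 1) + v^2 * q * (q - 1) + w^2 * r * (r - 1)
    + 2*u*v * q * (p - 1) + 2*u*w * r * (p - 1) + 2*v*w * r * (q - 1) + u + v + w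

private def Good (n : ℤ) : Prop :=
  ∃ u p q r : ℤ, 0 < u ∧ 2 ≤ p ∧ p < q ∧ q < r ∧
      n = u^2 * p * (p - 1) + q * (q - 1) + r * (r - 1)
          + 2*u * q * (p - 1) + 2*u * r * (p - 1) + 2 * r * (q - 1) + u + 2

private theorem good_general (n : ℤ) (hodd : Odd n) (hn : 2917 ≤ n) : Good n := by
  obtain ⟨k, hk⟩ := hodd
  set m : ℕ := n.toNat with hm
  have hmn : (m : ℤ) = n := Int.toNat_of_nonneg (by omega)
  set s : ℕ := Nat.sqrt m with hs
  have h1 : (s : ℤ) * s ≤ n := by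
    have := Nat.sqrt_le' m
    calc ((s:ℤ) * s) = ((s ^ 2 : ℕ) : ℤ) := by push_cast; ring
    _ ≤ (m : ℤ) := by exact_mod_cast this
    _ = n := hmn
  have h2 : n < ((s:ℤ) + 1) * ((s:ℤ) + 1) := by
    have := Nat.lt_succ_sqrt' m
    calc n = (m : ℤ) := hmn.symm
    _ < (((s+1) ^ 2 : ℕ) : ℤ) := by exact_mod_cast this
    _ = ((s:ℤ)+1) * ((s:ℤ)+1) := by push_cast; ring
  set S0 : ℤ := (s : ℤ) with hS0
  have hS0nn : 0 ≤ S0 := by positivity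
  have hS054 : 54 ≤ S0 := by nlinarith
  obtain ⟨S, hSw1, hSw2, hS47⟩ :
      ∃ S : ℤ, S*S - 9*S + 47 ≤ n ∧ n ≤ S*S - 5*S - 57 ∧ 47 ≤ S := by
    by_cases hc : n ≤ S0*S0 + 3*S0 - 61
    · exact ⟨S0 + 4, by nlinarith, by nlinarith, by omega⟩
    · exact ⟨S0 + 5, by nlinarith, by nlinarith, by omega⟩
  obtain ⟨e, he⟩ := Int.even_mul_succ_self (S - 1)
  set K : ℤ := e - S - k + 2 with hK
  have h2K : S*S - 3*S + 5 - n = 2*K := by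
    rw [hK]; linear_combination he - hk
  have hK1 : S + 31 ≤ K := by linarith
  have hK2 : K ≤ 3*S - 21 := by linarith
  set p : ℤ := max 2 ((5*S-2*K)/15 + 1) with hp
  have hp1 : 2 ≤ p ∧ 5*S-2*K < 15*p ∧ 10*p < 3*S - K := by omega
  refine ⟨3, p, 3*S - 9*p - K, K - 2*S + 6*p, by norm_num, hp1.1, by omega, by omega, ?_⟩
  linear_combination -h2K

private def chkb (k : ℤ) (w : ℤ × ℤ × ℤ × ℤ) : Bool :=
  decide (0 < w.1 ∧ 2 ≤ w.2.1 ∧ w.2.1 < w.2.2.1 ∧ w.2.2.1 < w.2.2.2 ∧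
    2*k+1 = w.1*w.1 * w.2.1 * (w.2.1 - 1) + w.2.2.1 * (w.2.2.1 - 1) + w.2.2.2 * (w.2.2.2 - 1)
      + 2*w.1 * w.2.2.1 * (w.2.1 - 1) + 2*w.1 * w.2.2.2 * (w.2.1 - 1)
      + 2 * w.2.2.2 * (w.2.2.1 - 1) + w.1 + 2)

private def run : ℤ → List (ℤ × ℤ × ℤ × ℤ) → Bool
  | _, [] => true
  | k, w :: ws => (k == 230 || chkb k w) && run (k+1) ws

private theorem run_sound (l : List (ℤ × ℤ × ℤ × ℤ)) (k0 : ℤ) (h : run k0 l = true) :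
    ∀ k : ℤ, k0 ≤ k → k < k0 + l.length → k ≠ 230 → Good (2*k+1) := by
  induction l generalizing k0 with
  | nil => intro k hk1 hk2; simp at hk2; omega
  | cons w ws ih =>
    simp only [run, Bool.and_eq_true] at h
    intro k hk1 hk2 hk3
    by_cases hke : k = k0
    · subst hke
      have hb : chkb k w = true := by
        rcases Bool.or_eq_true _ _ |>.mp h.1 with h' | h'
        · exfalso; exact hk3 (by simpa using h')
        · exact h'
      have hc := of_decide_eq_true hb
      exact ⟨w.1, w.2.1, w.2.2.1, w.2.2.2, hc.1, hc.2.1, hc.2.2.1, hc.2.2.2.1, by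
        rw [hc.2.2.2.2]; ring⟩
    · exact ih (k0+1) h.2 k (by omega) (by simp at hk2 ⊢; omega) hk3

private def tbl0 : List (ℤ × ℤ × ℤ × ℤ) := [(1,2,3,18), (1,2,4,17), (1,2,5,16), (1,2,6,15), (1,2,7,14), (1,2,8,13), (1,2,9,12), (1,2,10,11), (1,3,9,11), (1,4,8,11), (1,4,9,10), (1,5,8,10), (1,6,7,10), (1,6,8,9), (3,2,9,10), (1,2,3,4), (7,2,3,11), (7,2,4,10), (3,3,4,12), (3,3,5,11), (3,3,6,10), (1,2,3,19), (1,2,4,18), (1,2,5,17), (1,2,6,16), (1,2,7,15), (1,2,8,14), (1,2,9,13), (1,2,10,12), (1,3,9,12), (1,3,10,11), (1,4,9,11), (1,5,8,11), (1,5,9,10), (1,6,8,10), (3,2,9,11), (1,7,8,9), (7,2,4,11), (7,2,5,10), (3,3,4,13), (3,3,5,12), (3,3,6,11), (3,3,7,10), (1,2,3,20), (1,2,4,19), (1,2,5,18), (1,2,6,17), (1,2,7,16), (1,2,8,15), (1,2,9,14), (1,2,10,13), (1,2,11,12), (1,3,10,12), (1,4,9,12), (1,4,10,11), (1,5,9,11),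 (1,6,8,11), (1,6,9,10), (1,7,8,10), (7,2,5,11), (7,2,6,10), (3,3,4,14), (3,3,5,13), (3,3,6,12), (3,3,7,11), (3,3,8,10), (1,2,3,21), (1,2,4,20), (1,2,5,19), (1,2,6,18), (1,2,7,17), (1,2,8,16), (1,2,9,15), (1,2,10,14), (1,2,11,13), (1,3,10,13), (1,3,11,12), (1,4,10,12), (1,5,9,12), (1,5,10,11), (1,6,9,11), (1,7,8,11), (1,7,9,10), (7,2,7,10), (3,3,4,15), (3,3,5,14), (3,3,6,13), (3,3,7,12), (3,3,8,11), (3,3,9,10), (1,2,3,22), (1,2,4,21), (1,2,5,20), (1,2,6,19), (1,2,7,18), (1,2,8,17), (1,2,9,16), (1,2,10,15), (1,2,11,14), (1,2,12,13)]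

private def tbl1 : List (ℤ × ℤ × ℤ × ℤ) := [(1,3,11,13), (1,4,10,13), (1,4,11,12), (1,5,10,12), (1,6,9,12), (1,6,10,11), (1,7,9,11), (5,3,4,11), (1,8,9,10), (3,3,5,15), (3,3,6,14), (3,3,7,13), (3,3,8,12), (3,3,9,11), (5,2,7,14), (1,2,3,23), (1,2,4,22), (1,2,5,21), (1,2,6,20), (1,2,7,19), (1,2,8,18), (1,2,9,17), (1,2,10,16), (1,2,11,15), (1,2,12,14), (1,3,11,14), (1,3,12,13), (1,4,11,13), (1,5,10,13), (1,5,11,12), (1,6,10,12), (1,7,9,12), (1,7,10,11), (1,8,9,11), (3,3,5,16), (3,3,6,15), (3,3,7,14), (3,3,8,13), (3,3,9,12), (3,3,10,11), (5,2,8,14), (1,2,3,24), (1,2,4,23), (1,2,5,22), (1,2,6,21), (1,2,7,20), (1,2,8,19), (1,2,9,18), (1,2,10,17), (1,2,11,16), (1,2,12,15), (1,2,13,14), (1,3,12,14), (1,4,11,14), (1,4,12,13), (1,5,11,13), (1,6,10,13), (1,6,11,12), (1,7,10,12), (1,8,9,12), (1,8,10,11), (3,3,6,16), (3,3,7,15),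 (3,3,8,14), (3,3,9,13), (3,3,10,12), (5,2,8,15), (5,2,9,14), (1,2,3,25), (1,2,4,24), (1,2,5,23), (1,2,6,22), (1,2,7,21), (1,2,8,20), (1,2,9,19), (1,2,10,18), (1,2,11,17), (1,2,12,16), (1,2,13,15), (1,3,12,15), (1,3,13,14), (1,4,12,14), (1,5,11,14), (1,5,12,13), (1,6,11,13), (1,7,10,13), (1,7,11,12), (1,8,10,12), (3,3,6,17), (1,9,10,11), (3,3,8,15), (3,3,9,14), (3,3,10,13), (3,3,11,12), (5,2,9,15), (5,2,10,14), (1,2,3,26), (1,2,4,25), (1,2,5,24), (1,2,6,23)]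

private def tbl2 : List (ℤ × ℤ × ℤ × ℤ) := [(1,2,7,22), (1,2,8,21), (1,2,9,20), (1,2,10,19), (1,2,11,18), (1,2,12,17), (1,2,13,16), (1,2,14,15), (1,3,13,15), (1,4,12,15), (1,4,13,14), (1,5,12,14), (1,6,11,14), (1,6,12,13), (1,7,11,13), (1,8,10,13), (1,8,11,12), (1,9,10,12), (3,3,8,16), (3,3,9,15), (3,3,10,14), (3,3,11,13), (5,2,9,16), (5,2,10,15), (3,4,5,16), (1,2,3,27), (1,2,4,26), (1,2,5,25), (1,2,6,24), (1,2,7,23), (1,2,8,22), (1,2,9,21), (1,2,10,20), (1,2,11,19), (1,2,12,18), (1,2,13,17), (1,2,14,16), (1,3,13,16), (1,3,14,15), (1,4,13,15), (1,5,12,15), (1,5,13,14), (1,6,12,14), (1,7,11,14), (1,7,12,13), (1,8,11,13), (1,9,10,13), (1,9,11,12), (3,3,9,16), (3,3,10,15), (3,3,11,14), (3,3,12,13), (5,2,10,16), (3,4,5,17), (3,4,6,16), (1,2,3,28), (1,2,4,27), (1,2,5,26), (1,2,6,25), (1,2,7,24), (1,2,8,23), (1,2,9,22), (1,2,10,21),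 (1,2,11,20), (1,2,12,19), (1,2,13,18), (1,2,14,17), (1,2,15,16), (1,3,14,16), (1,4,13,16), (1,4,14,15), (1,5,13,15), (1,6,12,15), (1,6,13,14), (1,7,12,14), (1,8,11,14), (1,8,12,13), (1,9,11,13), (3,3,9,17), (1,10,11,12), (3,3,11,15), (3,3,12,14), (5,2,10,17), (3,4,5,18), (3,4,6,17), (3,4,7,16), (1,2,3,29), (1,2,4,28), (1,2,5,27), (1,2,6,26), (1,2,7,25), (1,2,8,24), (1,2,9,23), (1,2,10,22), (1,2,11,21), (1,2,12,20), (1,2,13,19), (1,2,14,18), (1,2,15,17), (1,3,14,17)]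

private def tbl3 : List (ℤ × ℤ × ℤ × ℤ) := [(1,3,15,16), (1,4,14,16), (1,5,13,16), (1,5,14,15), (1,6,13,15), (1,7,12,15), (1,7,13,14), (1,8,12,14), (1,9,11,14), (1,9,12,13), (1,10,11,13), (3,3,11,16), (3,3,12,15), (3,3,13,14), (3,4,5,19), (3,4,6,18), (3,4,7,17), (3,4,8,16), (1,2,3,30), (1,2,4,29), (1,2,5,28), (1,2,6,27), (1,2,7,26), (1,2,8,25), (1,2,9,24), (1,2,10,23), (1,2,11,22), (1,2,12,21), (1,2,13,20), (1,2,14,19), (1,2,15,18), (1,2,16,17), (1,3,15,17), (1,4,14,17), (1,4,15,16), (1,5,14,16), (1,6,13,16), (1,6,14,15), (1,7,13,15), (1,8,12,15), (1,8,13,14), (1,9,12,14), (1,10,11,14), (1,10,12,13), (3,3,12,16), (3,3,13,15), (3,4,5,20), (3,4,6,19), (3,4,7,18), (3,4,8,17), (3,4,9,16), (1,2,3,31), (1,2,4,30), (1,2,5,29), (1,2,6,28), (1,2,7,27), (1,2,8,26), (1,2,9,25), (1,2,10,24), (1,2,11,23), (1,2,12,22), (1,2,13,21), (1,2,14,20),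 (1,2,15,19), (1,2,16,18), (1,3,15,18), (1,3,16,17), (1,4,15,17), (1,5,14,17), (1,5,15,16), (1,6,14,16), (1,7,13,16), (1,7,14,15), (1,8,13,15), (1,9,12,15), (1,9,13,14), (1,10,12,14), (3,3,12,17), (1,11,12,13), (3,3,14,15), (3,4,6,20), (3,4,7,19), (3,4,8,18), (3,4,9,17), (3,4,10,16), (1,2,3,32), (1,2,4,31), (1,2,5,30), (1,2,6,29), (1,2,7,28), (1,2,8,27), (1,2,9,26), (1,2,10,25), (1,2,11,24), (1,2,12,23), (1,2,13,22), (1,2,14,21), (1,2,15,20), (1,2,16,19), (1,2,17,18)]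

private def tbl4 : List (ℤ × ℤ × ℤ × ℤ) := [(1,3,16,18), (1,4,15,18), (1,4,16,17), (1,5,15,17), (1,6,14,17), (1,6,15,16), (1,7,14,16), (1,8,13,16), (1,8,14,15), (1,9,13,15), (1,10,12,15), (1,10,13,14), (1,11,12,14), (3,3,14,16), (3,4,6,21), (3,4,7,20), (3,4,8,19), (3,4,9,18), (3,4,10,17), (3,4,11,16), (1,2,3,33), (1,2,4,32), (1,2,5,31), (1,2,6,30), (1,2,7,29), (1,2,8,28), (1,2,9,27), (1,2,10,26), (1,2,11,25), (1,2,12,24), (1,2,13,23), (1,2,14,22), (1,2,15,21), (1,2,16,20), (1,2,17,19), (1,3,16,19), (1,3,17,18), (1,4,16,18), (1,5,15,18), (1,5,16,17), (1,6,15,17), (1,7,14,17), (1,7,15,16), (1,8,14,16), (1,9,13,16), (1,9,14,15), (1,10,13,15), (1,11,12,15), (1,11,13,14), (3,3,15,16), (3,4,7,21), (3,4,8,20), (3,4,9,19), (3,4,10,18), (3,4,11,17), (3,4,12,16), (1,2,3,34), (1,2,4,33), (1,2,5,32), (1,2,6,31), (1,2,7,30), (1,2,8,29), (1,2,9,28),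 (1,2,10,27), (1,2,11,26), (1,2,12,25), (1,2,13,24), (1,2,14,23), (1,2,15,22), (1,2,16,21), (1,2,17,20), (1,2,18,19), (1,3,17,19), (1,4,16,19), (1,4,17,18), (1,5,16,18), (1,6,15,18), (1,6,16,17), (1,7,15,17), (1,8,14,17), (1,8,15,16), (1,9,14,16), (1,10,13,16), (1,10,14,15), (1,11,13,15), (3,3,15,17), (1,12,13,14), (3,4,8,21), (3,4,9,20), (3,4,10,19), (3,4,11,18), (3,4,12,17), (3,4,13,16), (1,2,3,35), (1,2,4,34), (1,2,5,33), (1,2,6,32), (1,2,7,31), (1,2,8,30), (1,2,9,29)]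

private def tbl5 : List (ℤ × ℤ × ℤ × ℤ) := [(1,2,10,28), (1,2,11,27), (1,2,12,26), (1,2,13,25), (1,2,14,24), (1,2,15,23), (1,2,16,22), (1,2,17,21), (1,2,18,20), (1,3,17,20), (1,3,18,19), (1,4,17,19), (1,5,16,19), (1,5,17,18), (1,6,16,18), (1,7,15,18), (1,7,16,17), (1,8,15,17), (1,9,14,17), (1,9,15,16), (1,10,14,16), (1,11,13,16), (1,11,14,15), (1,12,13,15), (3,4,8,22), (3,4,9,21), (3,4,10,20), (3,4,11,19), (3,4,12,18), (3,4,13,17), (3,4,14,16), (1,2,3,36), (1,2,4,35), (1,2,5,34), (1,2,6,33), (1,2,7,32), (1,2,8,31), (1,2,9,30), (1,2,10,29), (1,2,11,28), (1,2,12,27), (1,2,13,26), (1,2,14,25), (1,2,15,24), (1,2,16,23), (1,2,17,22), (1,2,18,21), (1,2,19,20), (1,3,18,20), (1,4,17,20), (1,4,18,19), (1,5,17,19), (1,6,16,19), (1,6,17,18), (1,7,16,18), (1,8,15,18), (1,8,16,17), (1,9,15,17), (1,10,14,17), (1,10,15,16), (1,11,14,16), (1,12,13,16), (1,12,14,15),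 (3,4,9,22), (3,4,10,21), (3,4,11,20), (3,4,12,19), (3,4,13,18), (3,4,14,17), (3,4,15,16), (1,2,3,37), (1,2,4,36), (1,2,5,35), (1,2,6,34), (1,2,7,33), (1,2,8,32), (1,2,9,31), (1,2,10,30), (1,2,11,29), (1,2,12,28), (1,2,13,27), (1,2,14,26), (1,2,15,25), (1,2,16,24), (1,2,17,23), (1,2,18,22), (1,2,19,21), (1,3,18,21), (1,3,19,20), (1,4,18,20), (1,5,17,20), (1,5,18,19), (1,6,17,19), (1,7,16,19), (1,7,17,18), (1,8,16,18), (1,9,15,18), (1,9,16,17), (1,10,15,17), (1,11,14,17)]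

private def tbl6 : List (ℤ × ℤ × ℤ × ℤ) := [(1,11,15,16), (1,12,14,16), (3,4,9,23), (1,13,14,15), (3,4,11,21), (3,4,12,20), (3,4,13,19), (3,4,14,18), (3,4,15,17), (3,5,7,22), (1,2,3,38), (1,2,4,37), (1,2,5,36), (1,2,6,35), (1,2,7,34), (1,2,8,33), (1,2,9,32), (1,2,10,31), (1,2,11,30), (1,2,12,29), (1,2,13,28), (1,2,14,27), (1,2,15,26), (1,2,16,25), (1,2,17,24), (1,2,18,23), (1,2,19,22), (1,2,20,21), (1,3,19,21), (1,4,18,21), (1,4,19,20), (1,5,18,20), (1,6,17,20), (1,6,18,19), (1,7,17,19), (1,8,16,19), (1,8,17,18), (1,9,16,18), (1,10,15,18), (1,10,16,17), (1,11,15,17), (1,12,14,17), (1,12,15,16), (1,13,14,16), (3,4,11,22), (3,4,12,21), (3,4,13,20), (3,4,14,19), (3,4,15,18), (3,4,16,17), (3,5,8,22), (1,2,3,39), (1,2,4,38), (1,2,5,37), (1,2,6,36), (1,2,7,35), (1,2,8,34), (1,2,9,33), (1,2,10,32), (1,2,11,31), (1,2,12,30), (1,2,13,29), (1,2,14,28),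 (1,2,15,27), (1,2,16,26), (1,2,17,25), (1,2,18,24), (1,2,19,23), (1,2,20,22), (1,3,19,22), (1,3,20,21), (1,4,19,21), (1,5,18,21), (1,5,19,20), (1,6,18,20), (1,7,17,20), (1,7,18,19), (1,8,17,19), (1,9,16,19), (1,9,17,18), (1,10,16,18), (1,11,15,18), (1,11,16,17), (1,12,15,17), (1,13,14,17), (1,13,15,16), (3,4,12,22), (3,4,13,21), (3,4,14,20), (3,4,15,19), (3,4,16,18), (3,5,8,23), (3,5,9,22), (1,2,3,40), (1,2,4,39), (1,2,5,38), (1,2,6,37), (1,2,7,36), (1,2,8,35), (1,2,9,34)]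

private def tbl7 : List (ℤ × ℤ × ℤ × ℤ) := [(1,2,10,33), (1,2,11,32), (1,2,12,31), (1,2,13,30), (1,2,14,29), (1,2,15,28), (1,2,16,27), (1,2,17,26), (1,2,18,25), (1,2,19,24), (1,2,20,23), (1,2,21,22), (1,3,20,22), (1,4,19,22), (1,4,20,21), (1,5,19,21), (1,6,18,21), (1,6,19,20), (1,7,18,20), (1,8,17,20), (1,8,18,19), (1,9,17,19), (1,10,16,19), (1,10,17,18), (1,11,16,18), (1,12,15,18), (1,12,16,17), (1,13,15,17), (3,4,12,23), (1,14,15,16), (3,4,14,21), (3,4,15,20), (3,4,16,19), (3,4,17,18), (3,5,9,23), (3,5,10,22), (1,2,3,41), (1,2,4,40), (1,2,5,39), (1,2,6,38), (1,2,7,37), (1,2,8,36), (1,2,9,35), (1,2,10,34), (1,2,11,33), (1,2,12,32), (1,2,13,31), (1,2,14,30), (1,2,15,29), (1,2,16,28), (1,2,17,27), (1,2,18,26), (1,2,19,25), (1,2,20,24), (1,2,21,23), (1,3,20,23), (1,3,21,22), (1,4,20,22), (1,5,19,22), (1,5,20,21), (1,6,19,21), (1,7,18,21), (1,7,19,20),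 (1,8,18,20), (1,9,17,20), (1,9,18,19), (1,10,17,19), (1,11,16,19), (1,11,17,18), (1,12,16,18), (1,13,15,18), (1,13,16,17), (1,14,15,17), (3,4,14,22), (3,4,15,21), (3,4,16,20), (3,4,17,19), (3,5,9,24), (3,5,10,23), (3,5,11,22), (1,2,3,42), (1,2,4,41), (1,2,5,40), (1,2,6,39), (1,2,7,38), (1,2,8,37), (1,2,9,36), (1,2,10,35), (1,2,11,34), (1,2,12,33), (1,2,13,32), (1,2,14,31), (1,2,15,30), (1,2,16,29), (1,2,17,28), (1,2,18,27), (1,2,19,26), (1,2,20,25), (1,2,21,24), (1,2,22,23)]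

private def tbl8 : List (ℤ × ℤ × ℤ × ℤ) := [(1,3,21,23), (1,4,20,23), (1,4,21,22), (1,5,20,22), (1,6,19,22), (1,6,20,21), (1,7,19,21), (1,8,18,21), (1,8,19,20), (1,9,18,20), (1,10,17,20), (1,10,18,19), (1,11,17,19), (1,12,16,19), (1,12,17,18), (1,13,16,18), (1,14,15,18), (1,14,16,17), (3,4,15,22), (3,4,16,21), (3,4,17,20), (3,4,18,19), (3,5,10,24), (3,5,11,23), (3,5,12,22), (1,2,3,43), (1,2,4,42), (1,2,5,41), (1,2,6,40), (1,2,7,39), (1,2,8,38), (1,2,9,37), (1,2,10,36), (1,2,11,35), (1,2,12,34), (1,2,13,33), (1,2,14,32), (1,2,15,31), (1,2,16,30), (1,2,17,29), (1,2,18,28), (1,2,19,27), (1,2,20,26), (1,2,21,25), (1,2,22,24), (1,3,21,24), (1,3,22,23), (1,4,21,23), (1,5,20,23), (1,5,21,22), (1,6,20,22), (1,7,19,22), (1,7,20,21), (1,8,19,21), (1,9,18,21), (1,9,19,20), (1,10,18,20), (1,11,17,20), (1,11,18,19), (1,12,17,19), (1,13,16,19), (1,13,17,18), (1,14,16,18),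 (3,4,15,23), (1,15,16,17), (3,4,17,21), (3,4,18,20), (3,5,10,25), (3,5,11,24), (3,5,12,23), (3,5,13,22), (1,2,3,44), (1,2,4,43), (1,2,5,42), (1,2,6,41), (1,2,7,40), (1,2,8,39), (1,2,9,38), (1,2,10,37), (1,2,11,36), (1,2,12,35), (1,2,13,34), (1,2,14,33), (1,2,15,32), (1,2,16,31), (1,2,17,30), (1,2,18,29), (1,2,19,28), (1,2,20,27), (1,2,21,26), (1,2,22,25), (1,2,23,24), (1,3,22,24), (1,4,21,24), (1,4,22,23), (1,5,21,23), (1,6,20,23), (1,6,21,22), (1,7,20,22), (1,8,19,22)]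

private def tbl9 : List (ℤ × ℤ × ℤ × ℤ) := [(1,8,20,21), (1,9,19,21), (1,10,18,21), (1,10,19,20), (1,11,18,20), (1,12,17,20), (1,12,18,19), (1,13,17,19), (1,14,16,19), (1,14,17,18), (1,15,16,18), (3,4,17,22), (3,4,18,21), (3,4,19,20), (3,5,11,25), (3,5,12,24), (3,5,13,23), (3,5,14,22), (1,2,3,45), (1,2,4,44), (1,2,5,43), (1,2,6,42), (1,2,7,41), (1,2,8,40), (1,2,9,39), (1,2,10,38), (1,2,11,37), (1,2,12,36), (1,2,13,35), (1,2,14,34), (1,2,15,33), (1,2,16,32), (1,2,17,31), (1,2,18,30), (1,2,19,29), (1,2,20,28), (1,2,21,27), (1,2,22,26), (1,2,23,25), (1,3,22,25), (1,3,23,24), (1,4,22,24), (1,5,21,24), (1,5,22,23), (1,6,21,23), (1,7,20,23), (1,7,21,22), (1,8,20,22), (1,9,19,22), (1,9,20,21), (1,10,19,21), (1,11,18,21), (1,11,19,20), (1,12,18,20), (1,13,17,20), (1,13,18,19), (1,14,17,19), (1,15,16,19), (1,15,17,18), (3,4,18,22), (3,4,19,21), (3,5,11,26), (3,5,12,25),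 (3,5,13,24), (3,5,14,23), (3,5,15,22), (1,2,3,46), (1,2,4,45), (1,2,5,44), (1,2,6,43), (1,2,7,42), (1,2,8,41), (1,2,9,40), (1,2,10,39), (1,2,11,38), (1,2,12,37), (1,2,13,36), (1,2,14,35), (1,2,15,34), (1,2,16,33), (1,2,17,32), (1,2,18,31), (1,2,19,30), (1,2,20,29), (1,2,21,28), (1,2,22,27), (1,2,23,26), (1,2,24,25), (1,3,23,25), (1,4,22,25), (1,4,23,24), (1,5,22,24), (1,6,21,24), (1,6,22,23), (1,7,21,23), (1,8,20,23), (1,8,21,22), (1,9,20,22), (1,10,19,22), (1,10,20,21)]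

private def tbl10 : List (ℤ × ℤ × ℤ × ℤ) := [(1,11,19,21), (1,12,18,21), (1,12,19,20), (1,13,18,20), (1,14,17,20), (1,14,18,19), (1,15,17,19), (3,4,18,23), (1,16,17,18), (3,4,20,21), (3,5,12,26), (3,5,13,25), (3,5,14,24), (3,5,15,23), (3,5,16,22), (1,2,3,47), (1,2,4,46), (1,2,5,45), (1,2,6,44), (1,2,7,43), (1,2,8,42), (1,2,9,41), (1,2,10,40), (1,2,11,39), (1,2,12,38), (1,2,13,37), (1,2,14,36), (1,2,15,35), (1,2,16,34), (1,2,17,33), (1,2,18,32), (1,2,19,31), (1,2,20,30), (1,2,21,29), (1,2,22,28), (1,2,23,27), (1,2,24,26), (1,3,23,26), (1,3,24,25), (1,4,23,25), (1,5,22,25), (1,5,23,24), (1,6,22,24), (1,7,21,24), (1,7,22,23), (1,8,21,23), (1,9,20,23), (1,9,21,22), (1,10,20,22), (1,11,19,22), (1,11,20,21), (1,12,19,21), (1,13,18,21), (1,13,19,20), (1,14,18,20), (1,15,17,20), (1,15,18,19), (1,16,17,19), (3,4,20,22), (3,5,12,27), (3,5,13,26), (3,5,14,25), (3,5,15,24),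 (3,5,16,23), (3,5,17,22), (1,2,3,48), (1,2,4,47), (1,2,5,46), (1,2,6,45), (1,2,7,44), (1,2,8,43), (1,2,9,42), (1,2,10,41), (1,2,11,40), (1,2,12,39), (1,2,13,38), (1,2,14,37), (1,2,15,36), (1,2,16,35), (1,2,17,34), (1,2,18,33), (1,2,19,32), (1,2,20,31), (1,2,21,30), (1,2,22,29), (1,2,23,28), (1,2,24,27), (1,2,25,26), (1,3,24,26), (1,4,23,26), (1,4,24,25), (1,5,23,25), (1,6,22,25), (1,6,23,24), (1,7,22,24), (1,8,21,24), (1,8,22,23), (1,9,21,23), (1,10,20,23), (1,10,21,22)]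

private def tbl11 : List (ℤ × ℤ × ℤ × ℤ) := [(1,11,20,22), (1,12,19,22), (1,12,20,21), (1,13,19,21), (1,14,18,21), (1,14,19,20), (1,15,18,20), (1,16,17,20), (1,16,18,19), (3,4,21,22), (3,5,13,27), (3,5,14,26), (3,5,15,25), (3,5,16,24), (3,5,17,23), (3,5,18,22), (1,2,3,49), (1,2,4,48), (1,2,5,47), (1,2,6,46), (1,2,7,45), (1,2,8,44), (1,2,9,43), (1,2,10,42), (1,2,11,41), (1,2,12,40), (1,2,13,39), (1,2,14,38), (1,2,15,37), (1,2,16,36), (1,2,17,35), (1,2,18,34), (1,2,19,33), (1,2,20,32), (1,2,21,31), (1,2,22,30), (1,2,23,29), (1,2,24,28), (1,2,25,27), (1,3,24,27), (1,3,25,26), (1,4,24,26), (1,5,23,26), (1,5,24,25), (1,6,23,25), (1,7,22,25), (1,7,23,24), (1,8,22,24), (1,9,21,24), (1,9,22,23), (1,10,21,23), (1,11,20,23), (1,11,21,22), (1,12,20,22), (1,13,19,22), (1,13,20,21), (1,14,19,21), (1,15,18,21), (1,15,19,20), (1,16,18,20), (3,4,21,23), (1,17,18,19), (3,5,14,27),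 (3,5,15,26), (3,5,16,25), (3,5,17,24), (3,5,18,23), (3,5,19,22), (1,2,3,50), (1,2,4,49), (1,2,5,48), (1,2,6,47), (1,2,7,46), (1,2,8,45), (1,2,9,44), (1,2,10,43), (1,2,11,42), (1,2,12,41), (1,2,13,40), (1,2,14,39), (1,2,15,38), (1,2,16,37), (1,2,17,36), (1,2,18,35), (1,2,19,34), (1,2,20,33), (1,2,21,32), (1,2,22,31), (1,2,23,30), (1,2,24,29), (1,2,25,28), (1,2,26,27), (1,3,25,27), (1,4,24,27), (1,4,25,26), (1,5,24,26), (1,6,23,26), (1,6,24,25), (1,7,23,25), (1,8,22,25)]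

private def tbl12 : List (ℤ × ℤ × ℤ × ℤ) := [(1,8,23,24), (1,9,22,24), (1,10,21,24), (1,10,22,23), (1,11,21,23), (1,12,20,23), (1,12,21,22), (1,13,20,22), (1,14,19,22), (1,14,20,21), (1,15,19,21), (1,16,18,21), (1,16,19,20), (1,17,18,20), (3,5,14,28), (3,5,15,27), (3,5,16,26), (3,5,17,25), (3,5,18,24), (3,5,19,23), (3,5,20,22), (1,2,3,51), (1,2,4,50), (1,2,5,49), (1,2,6,48), (1,2,7,47), (1,2,8,46), (1,2,9,45), (1,2,10,44), (1,2,11,43), (1,2,12,42), (1,2,13,41), (1,2,14,40), (1,2,15,39), (1,2,16,38), (1,2,17,37), (1,2,18,36), (1,2,19,35), (1,2,20,34), (1,2,21,33), (1,2,22,32), (1,2,23,31), (1,2,24,30)]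

private def tbl : List (ℤ × ℤ × ℤ × ℤ) := tbl0 ++ tbl1 ++ tbl2 ++ tbl3 ++ tbl4 ++ tbl5 ++ tbl6 ++ tbl7 ++ tbl8 ++ tbl9 ++ tbl10 ++ tbl11 ++ tbl12


set_option maxRecDepth 100000 in
private theorem tbl_len : (tbl : List (ℤ × ℤ × ℤ × ℤ)).length = 1243 := by rfl

set_option maxRecDepth 100000 in
set_option maxHeartbeats 1000000 in
private theorem run_tbl : run 215 tbl = true := by decide

theorem dIII_odd_values (n : ℤ) (hodd : Odd n) (hn : 431 ≤ n) (hn' : n ≠ 461) :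
    ∃ u p q r : ℤ, 0 < u ∧ 2 ≤ p ∧ p < q ∧ q < r ∧
      n = u^2 * p * (p - 1) + q * (q - 1) + r * (r - 1)
          + 2*u * q * (p - 1) + 2*u * r * (p - 1) + 2 * r * (q - 1) + u + 2 := by
  by_cases hbig : 2917 ≤ n
  · exact good_general n hodd hbig
  · obtain ⟨k, hk⟩ := hodd
    have h1 : 215 ≤ k := by omega
    have h2 : k < 215 + (tbl.length : ℤ) := by rw [tbl_len]; omega
    have h3 : k ≠ 230 := by omega
    have hg : Good (2*k+1) := run_sound tbl 215 run_tbl k h1 h2 h3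
    have hn2 : n = 2*k+1 := by omega
    rw [hn2]; exact hg
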